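/- For every real number s with 0 < s < 2, the function g_s is integrable on (1/2,1) and lim_{r→∞} (1/(2r+1)) · ∑_{p=r+1}^{2r} g_s( p/(2r+1) ) = ∫_{1/2}^{1} g_s(x) dx, where the limit is taken over positive integers r. -/

import Mathlib

open Filter Finset MeasureTheory Set Topology

noncomputable def gg (s x : ℝ) : ℝ := x * (1 - x) / (2 * x - 1) *
  (x ^ (-s) * (-1 + s * Real.log x) - (1 - x) ^ (-s) * (-1 + s * Real.log (1 - x)))

noncomputable def FF (s y : ℝ) : ℝ := y ^ (-s) * (-1 + s * Real.log y)
noncomputable def FF' (s y : ℝ) : ℝ :=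
  (-s * y ^ (-s - 1)) * (-1 + s * Real.log y) + y ^ (-s) * (s * y⁻¹)

lemma hasDerivAt_FF {s y : ℝ} (hy : 0 < y) : HasDerivAt (FF s) (FF' s y) y := by
  have h1 : HasDerivAt (fun y : ℝ => y ^ (-s)) (-s * y ^ (-s - 1)) y :=
    Real.hasDerivAt_rpow_const (Or.inl hy.ne')
  have h2 : HasDerivAt (fun y : ℝ => -1 + s * Real.log y) (s * y⁻¹) y := by
    simpa using ((Real.hasDerivAt_log hy.ne').const_mul s).const_add (-1)
  exact h1.mul h2

lemma continuousOn_FF' (s : ℝ) : ContinuousOn (FF' s) (Set.Ici (1/4 : ℝ) ) := by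
  intro y hy
  simp only [Set.mem_Ici] at hy
  have hne : y ≠ 0 := by nlinarith
  apply ContinuousAt.continuousWithinAt
  exact ((continuousAt_const.mul (Real.continuousAt_rpow_const y _ (Or.inl hne))).mul
    (continuousAt_const.add (continuousAt_const.mul (Real.continuousAt_log hne)))).add
    ((Real.continuousAt_rpow_const y _ (Or.inl hne)).mul
      (continuousAt_const.mul (continuousAt_inv₀ hne)))
lemma continuousAt_gg {s x : ℝ} (hx : x ∈ Set.Ioo (1/2 : ℝ) 1) : ContinuousAt (gg s) x := by
  obtain ⟨h1, h2⟩ := hx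
  have hx0 : x ≠ 0 := by linarith
  have hx1 : (1 : ℝ) - x ≠ 0 := by intro h; linarith [sub_eq_zero.mp h]
  have hd : 2 * x - 1 ≠ 0 := by intro h; nlinarith [sub_eq_zero.mp h]
  unfold gg
  apply ContinuousAt.mul
  · exact ((continuousAt_id.mul (continuousAt_const.sub continuousAt_id)).div
      ((continuousAt_const.mul continuousAt_id).sub continuousAt_const) hd)
  · apply ContinuousAt.sub
    · exact (Real.continuousAt_rpow_const x (-s) (Or.inl hx0)).mul
        (continuousAt_const.add (continuousAt_const.mul (Real.continuousAt_log hx0)))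
    · exact ((Real.continuousAt_rpow_const _ (-s) (Or.inl hx1)).comp
        (continuousAt_const.sub continuousAt_id)).mul
        (continuousAt_const.add (continuousAt_const.mul
          ((Real.continuousAt_log hx1).comp (continuousAt_const.sub continuousAt_id))))

set_option maxHeartbeats 1000000 in
lemma gg_bound (s : ℝ) (hs0 : 0 < s) (hs2 : s < 2) :
    ∃ C : ℝ, 0 < C ∧ ∀ x ∈ Set.Ioo (1/2 : ℝ) 1, |gg s x| ≤ C * (1 - x) ^ (-s/2) := by
  obtain ⟨M, hM⟩ := (isCompact_Icc (a := (1/4:ℝ)) (b := (3/4:ℝ))).exists_bound_of_continuousOn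
    ((continuousOn_FF' s).mono (fun y hy => hy.1))
  have hM0 : 0 ≤ M := le_trans (norm_nonneg _) (hM (1/2) (by norm_num))
  set ε : ℝ := 1 - s/2 with hε_def
  have hε : 0 < ε := by rw [hε_def]; linarith
  clear_value ε
  refine ⟨M + 8 + 4/ε, by positivity, fun x hx => ?_⟩
  obtain ⟨h1, h2⟩ := hx
  have hu0 : 0 < 1 - x := by linarith
  have hu1 : 1 - x ≤ 1 := by linarith
  have hP1 : (1:ℝ) ≤ (1-x) ^ (-s/2) :=
    Real.one_le_rpow_of_pos_of_le_one_of_nonpos hu0 hu1 (by linarith)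
  have hPpos : 0 < (1-x) ^ (-s/2) := lt_of_lt_of_le one_pos hP1
  have hd : (0:ℝ) < 2 * x - 1 := by linarith
  rcases le_or_gt x (3/4) with hx34 | hx34
  · -- MVT region
    have hab : 1 - x < x := by linarith
    have hcont : ContinuousOn (FF s) (Set.Icc (1-x) x) := fun y hy =>
      ((hasDerivAt_FF (s := s) (y := y) (by linarith [hy.1])).continuousAt).continuousWithinAt
    have hderiv : ∀ y ∈ Set.Ioo (1-x) x, HasDerivAt (FF s) (FF' s y) y := fun y hy =>
      hasDerivAt_FF (by linarith [hy.1])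
    obtain ⟨ξ, hξ, hslope⟩ := exists_hasDerivAt_eq_slope (FF s) (FF' s) hab hcont hderiv
    have hxsub : x - (1 - x) = 2 * x - 1 := by ring
    have hdiff : FF s x - FF s (1 - x) = FF' s ξ * (2 * x - 1) := by
      rw [hslope, hxsub, div_mul_cancel₀ _ hd.ne']
    have hgg : gg s x = x * (1 - x) * FF' s ξ := by
      rw [gg, show x ^ (-s) * (-1 + s * Real.log x) - (1 - x) ^ (-s) * (-1 + s * Real.log (1 - x))
        = FF s x - FF s (1 - x) from rfl, hdiff]
      rw [mul_comm (FF' s ξ), ← mul_assoc, div_mul_cancel₀ _ hd.ne']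
    have hξmem : ξ ∈ Set.Icc (1/4:ℝ) (3/4) := ⟨by linarith [hξ.1], by linarith [hξ.2]⟩
    have hbd := hM ξ hξmem
    rw [Real.norm_eq_abs] at hbd
    have hxx : |x * (1 - x)| ≤ 1 := by
      rw [abs_of_nonneg (by nlinarith)]; nlinarith
    calc |gg s x| = |x * (1-x)| * |FF' s ξ| := by rw [hgg, abs_mul]
      _ ≤ 1 * M := mul_le_mul hxx hbd (abs_nonneg _) one_pos.le
      _ = M := one_mul M
      _ ≤ (M + 8 + 4/ε) * 1 := by
          rw [mul_one]
          have h4 : 0 < 4/ε := by positivity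
          linarith
      _ ≤ (M + 8 + 4/ε) * (1-x) ^ (-s/2) := by
          apply mul_le_mul_of_nonneg_left hP1
          have h4 : 0 < 4/ε := by positivity
          linarith
  · -- near 1 region
    have hA : |x * (1 - x) / (2 * x - 1)| ≤ 2 * (1-x) := by
      rw [abs_of_nonneg (by positivity)]
      rw [div_le_iff₀ hd]
      nlinarith
    have hBx : |x ^ (-s) * (-1 + s * Real.log x)| ≤ 3 := by
      rw [abs_mul]
      have hxp : (0:ℝ) < x := by linarith
      have e1 : |x ^ (-s)| ≤ (16/9 : ℝ) := by
        rw [abs_of_nonneg (Real.rpow_nonneg hxp.le _)]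
        calc x ^ (-s) ≤ (3/4 : ℝ) ^ (-s) :=
              Real.rpow_le_rpow_of_nonpos (by norm_num) (by linarith) (by linarith)
          _ ≤ (3/4 : ℝ) ^ (-2 : ℝ) :=
              Real.rpow_le_rpow_of_exponent_ge (by norm_num) (by norm_num) (by linarith)
          _ = 16/9 := by
              rw [show (-2:ℝ) = ((-2:ℤ):ℝ) by norm_num, Real.rpow_intCast]; norm_num
      have e2 : |(-1 + s * Real.log x)| ≤ 1 + s * (1/3) := by
        have hlog_le : Real.log x ≤ 0 := Real.log_nonpos (by linarith) (by linarith)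
        have hlog_ge : -(1/3 : ℝ) ≤ Real.log x := by
          have := Real.log_le_sub_one_of_pos (x := x⁻¹) (by positivity)
          rw [Real.log_inv] at this
          have hxi : x⁻¹ ≤ 4/3 := by
            rw [inv_le_comm₀ (by linarith) (by norm_num)]; linarith
          linarith
        rw [abs_le]; constructor <;> nlinarith
      calc |x ^ (-s)| * |(-1 + s * Real.log x)| ≤ (16/9) * (1 + s * (1/3)) :=
            mul_le_mul e1 e2 (abs_nonneg _) (by norm_num)
        _ ≤ 3 := by nlinarith
    have hL0 : 0 ≤ Real.log (1-x)⁻¹ := Real.log_nonneg (by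
      rw [le_inv_comm₀ one_pos hu0]; linarith)
    have hBu : |(1-x) ^ (-s) * (-1 + s * Real.log (1-x))| ≤ (1-x) ^ (-s) * (1 + s * Real.log (1-x)⁻¹) := by
      rw [abs_mul, abs_of_nonneg (Real.rpow_nonneg hu0.le _)]
      apply mul_le_mul_of_nonneg_left _ (Real.rpow_nonneg hu0.le _)
      rw [Real.log_inv]
      have : Real.log (1-x) ≤ 0 := Real.log_nonpos hu0.le hu1
      rw [abs_le]; constructor <;> nlinarith
    have key : |gg s x| ≤ 2 * (1-x) * (3 + (1-x) ^ (-s) * (1 + s * Real.log (1-x)⁻¹)) := by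
      rw [gg, abs_mul]
      apply mul_le_mul hA _ (abs_nonneg _) (by positivity)
      calc |x ^ (-s) * (-1 + s * Real.log x) - (1-x) ^ (-s) * (-1 + s * Real.log (1-x))|
          ≤ |x ^ (-s) * (-1 + s * Real.log x)| + |(1-x) ^ (-s) * (-1 + s * Real.log (1-x))| :=
            abs_sub _ _
        _ ≤ 3 + (1-x) ^ (-s) * (1 + s * Real.log (1-x)⁻¹) := add_le_add hBx hBu
    -- now bound RHS by C * u^(-s/2)
    have hus : (1-x) * (1-x) ^ (-s) = (1-x) ^ (1 - s) := by
      rw [show (1 - s) = 1 + (-s) by ring, Real.rpow_add hu0, Real.rpow_one]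
    have h1s : (1-x) ^ (1 - s) ≤ (1-x) ^ (-s/2) :=
      Real.rpow_le_rpow_of_exponent_ge hu0 hu1 (by linarith)
    have hlog : Real.log (1-x)⁻¹ ≤ (1-x) ^ (-ε) / ε := by
      have h := Real.log_le_rpow_div (x := (1-x)⁻¹) (by positivity) hε
      have heq : ((1-x)⁻¹ : ℝ) ^ ε = (1-x) ^ (-ε) := by
        rw [Real.inv_rpow hu0.le, ← Real.rpow_neg hu0.le]
      rwa [heq] at h

    have h3 : (1-x) ^ (1 - s) * Real.log (1-x)⁻¹ ≤ (1-x) ^ (-s/2) / ε := by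
      calc (1-x) ^ (1 - s) * Real.log (1-x)⁻¹ ≤ (1-x) ^ (1 - s) * ((1-x) ^ (-ε) / ε) :=
            mul_le_mul_of_nonneg_left hlog (Real.rpow_nonneg hu0.le _)
        _ = (1-x) ^ (1 - s) * (1-x) ^ (-ε) / ε := by ring
        _ = (1-x) ^ (-s/2) / ε := by
            rw [← Real.rpow_add hu0]; congr 1; simp only [hε_def]; ring
    have hterm0 : (1-x) ^ (1-s) * Real.log (1-x)⁻¹ ≥ 0 :=
      mul_nonneg (Real.rpow_nonneg hu0.le _) hL0
    have expand : 2 * (1-x) * (3 + (1-x) ^ (-s) * (1 + s * Real.log (1-x)⁻¹))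
        = 6 * (1-x) + 2 * (1-x) ^ (1-s) + 2 * s * ((1-x) ^ (1-s) * Real.log (1-x)⁻¹) := by
      rw [← hus]; ring
    have hfin : 6 * (1-x) + 2 * (1-x) ^ (1-s) + 2 * s * ((1-x) ^ (1-s) * Real.log (1-x)⁻¹)
        ≤ (M + 8 + 4/ε) * (1-x) ^ (-s/2) := by
      have e1 : 6 * (1-x) ≤ 6 * (1-x) ^ (-s/2) := by linarith
      have e2 : 2 * (1-x) ^ (1-s) ≤ 2 * (1-x) ^ (-s/2) := by linarith
      have e3 : 2 * s * ((1-x) ^ (1-s) * Real.log (1-x)⁻¹) ≤ 4 * ((1-x) ^ (-s/2) / ε) := by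
        have h4 : 2 * s * ((1-x) ^ (1-s) * Real.log (1-x)⁻¹)
            ≤ 4 * ((1-x) ^ (1-s) * Real.log (1-x)⁻¹) :=
          mul_le_mul_of_nonneg_right (by linarith) hterm0
        linarith
      have hMP : 0 ≤ M * (1-x) ^ (-s/2) := mul_nonneg hM0 hPpos.le
      have hrhs : (M + 8 + 4/ε) * (1-x) ^ (-s/2)
          = M * (1-x) ^ (-s/2) + 8 * (1-x) ^ (-s/2) + 4 * ((1-x) ^ (-s/2) / ε) := by ring
      linarith
    calc |gg s x| ≤ 2 * (1-x) * (3 + (1-x) ^ (-s) * (1 + s * Real.log (1-x)⁻¹)) := key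
      _ = _ := expand
      _ ≤ (M + 8 + 4/ε) * (1-x) ^ (-s/2) := hfin

lemma bound_integrableOn (s C : ℝ) (hs2 : s < 2) :
    IntegrableOn (fun x : ℝ => C * (1 - x) ^ (-s/2)) (Set.Ioo (1/2:ℝ) 1) := by
  have h1 : IntervalIntegrable (fun x : ℝ => x ^ (-s/2)) volume 0 (1/2) :=
    intervalIntegral.intervalIntegrable_rpow' (by linarith)
  have h2 := h1.comp_sub_left 1
  have h3 : IntervalIntegrable (fun x : ℝ => (1-x) ^ (-s/2)) volume (1/2) 1 := by
    norm_num at h2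
    exact h2.symm
  rw [intervalIntegrable_iff_integrableOn_Ioc_of_le (by norm_num)] at h3
  have h4 := (integrableOn_Ioc_iff_integrableOn_Ioo (f := fun x : ℝ => (1-x) ^ (-s/2))).mp h3
  exact h4.const_mul C

lemma gg_integrableOn (s : ℝ) (hs0 : 0 < s) (hs2 : s < 2) :
    IntegrableOn (gg s) (Set.Ioo (1/2:ℝ) 1) := by
  obtain ⟨C, hC, hbd⟩ := gg_bound s hs0 hs2
  have hmeas : AEStronglyMeasurable (gg s) (volume.restrict (Set.Ioo (1/2:ℝ) 1)) :=
    (continuousOn_of_forall_continuousAt (fun x hx => continuousAt_gg hx)).aestronglyMeasurable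
      measurableSet_Ioo
  exact Integrable.mono' (bound_integrableOn s C hs2) hmeas
    ((ae_restrict_iff' measurableSet_Ioo).2 (ae_of_all _ (fun x hx => by
      rw [Real.norm_eq_abs]; exact hbd x hx)))

noncomputable def fr (s : ℝ) (r : ℕ) (x : ℝ) : ℝ :=
  ∑ p ∈ Finset.Icc (r+1) (2*r),
    Set.indicator (Set.Ico ((p:ℝ)/(2*(r:ℝ)+1)) (((p:ℝ)+1)/(2*(r:ℝ)+1)))
      (fun _ => gg s ((p:ℝ)/(2*(r:ℝ)+1))) x

lemma hN (r : ℕ) : (0:ℝ) < 2*(r:ℝ)+1 := by positivity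

lemma mem_Ico_iff_floor {r p : ℕ} {x : ℝ} (hx0 : 0 ≤ x) :
    x ∈ Set.Ico ((p:ℝ)/(2*(r:ℝ)+1)) (((p:ℝ)+1)/(2*(r:ℝ)+1)) ↔ ⌊(2*(r:ℝ)+1)*x⌋₊ = p := by
  rw [Set.mem_Ico, div_le_iff₀ (hN r), lt_div_iff₀ (hN r),
    Nat.floor_eq_iff (by positivity)]
  constructor
  · rintro ⟨h1, h2⟩; exact ⟨by linarith [mul_comm x (2*(r:ℝ)+1)], by rw [mul_comm]; linarith⟩
  · rintro ⟨h1, h2⟩; exact ⟨by rw [mul_comm]; linarith, by rw [mul_comm] at h2 ⊢; linarith⟩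

lemma fr_eq {s : ℝ} {r : ℕ} {x : ℝ} (hx0 : 0 ≤ x) :
    fr s r x = if r+1 ≤ ⌊(2*(r:ℝ)+1)*x⌋₊ ∧ ⌊(2*(r:ℝ)+1)*x⌋₊ ≤ 2*r
      then gg s ((⌊(2*(r:ℝ)+1)*x⌋₊ : ℝ)/(2*(r:ℝ)+1)) else 0 := by
  set p0 := ⌊(2*(r:ℝ)+1)*x⌋₊ with hp0
  by_cases hc : r+1 ≤ p0 ∧ p0 ≤ 2*r
  · rw [if_pos hc]
    rw [fr]
    rw [Finset.sum_eq_single p0]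
    · rw [Set.indicator_of_mem ((mem_Ico_iff_floor hx0).2 hp0.symm)]
    · intro p hp hne
      apply Set.indicator_of_notMem
      intro hmem
      exact hne ((mem_Ico_iff_floor hx0).1 hmem ▸ rfl)
    · intro hnot
      exact absurd (Finset.mem_Icc.2 hc) hnot
  · rw [if_neg hc, fr]
    apply Finset.sum_eq_zero
    intro p hp
    apply Set.indicator_of_notMem
    intro hmem
    have := (mem_Ico_iff_floor hx0).1 hmem
    rw [← hp0] at this
    rw [Finset.mem_Icc] at hp
    exact hc (this ▸ hp)

lemma Ico_subset {r p : ℕ} (hp : p ∈ Finset.Icc (r+1) (2*r)) :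
    Set.Ico ((p:ℝ)/(2*(r:ℝ)+1)) (((p:ℝ)+1)/(2*(r:ℝ)+1)) ⊆ Set.Ioo (1/2:ℝ) 1 := by
  rw [Finset.mem_Icc] at hp
  obtain ⟨hp1, hp2⟩ := hp
  intro x hx
  obtain ⟨h1, h2⟩ := hx
  have hN' := hN r
  have hp1' : (r:ℝ) + 1 ≤ (p:ℝ) := by exact_mod_cast hp1
  have hp2' : (p:ℝ) ≤ 2*(r:ℝ) := by exact_mod_cast hp2
  constructor
  · have : (1/2 : ℝ) < (p:ℝ)/(2*(r:ℝ)+1) := by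
      rw [div_lt_div_iff₀ (by norm_num) hN']
      linarith
    linarith
  · have : ((p:ℝ)+1)/(2*(r:ℝ)+1) ≤ 1 := by
      rw [div_le_one hN']
      linarith
    linarith

lemma fr_integral (s : ℝ) (r : ℕ) :
    ∫ x in Set.Ioo (1/2:ℝ) 1, fr s r x
      = (1/(2*(r:ℝ)+1)) * ∑ p ∈ Finset.Icc (r+1) (2*r), gg s ((p:ℝ)/(2*(r:ℝ)+1)) := by
  have hvol : volume (Set.Ioo (1/2:ℝ) 1) < ⊤ := by
    rw [Real.volume_Ioo]; exact ENNReal.ofReal_lt_top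
  have hint : ∀ p ∈ Finset.Icc (r+1) (2*r),
      Integrable (fun x => Set.indicator
        (Set.Ico ((p:ℝ)/(2*(r:ℝ)+1)) (((p:ℝ)+1)/(2*(r:ℝ)+1)))
        (fun _ => gg s ((p:ℝ)/(2*(r:ℝ)+1))) x) (volume.restrict (Set.Ioo (1/2:ℝ) 1)) := by
    intro p hp
    exact (integrableOn_const hvol.ne).indicator measurableSet_Ico
  rw [show (fun x => fr s r x) = fr s r from rfl]
  unfold fr
  rw [integral_finset_sum _ hint, Finset.mul_sum]
  apply Finset.sum_congr rfl
  intro p hp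
  rw [integral_indicator_const _ measurableSet_Ico, measureReal_def, Measure.restrict_apply measurableSet_Ico,
    Set.inter_eq_left.2 (Ico_subset hp), Real.volume_Ico, smul_eq_mul]
  congr 1
  rw [show ((p:ℝ)+1)/(2*(r:ℝ)+1) - (p:ℝ)/(2*(r:ℝ)+1) = 1/(2*(r:ℝ)+1) by
    field_simp; ring]
  rw [ENNReal.toReal_ofReal (by positivity)]

lemma floor_le_2r {r : ℕ} {x : ℝ} (hx0 : 0 ≤ x) (hx1 : x < 1) :
    ⌊(2*(r:ℝ)+1)*x⌋₊ ≤ 2*r := by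
  have : ⌊(2*(r:ℝ)+1)*x⌋₊ < 2*r+1 := by
    rw [Nat.floor_lt (by positivity)]
    push_cast
    nlinarith [hN r]
  omega

lemma fr_meas (s : ℝ) (r : ℕ) : Measurable (fr s r) := by
  unfold fr
  exact Finset.measurable_sum _ (fun p hp =>
    Measurable.indicator measurable_const measurableSet_Ico)

lemma fr_bound {s C : ℝ} (hC : 0 < C)
    (hbd : ∀ x ∈ Set.Ioo (1/2 : ℝ) 1, |gg s x| ≤ C * (1 - x) ^ (-s/2))
    (hs0 : 0 < s) (r : ℕ) :
    ∀ x ∈ Set.Ioo (1/2 : ℝ) 1, |fr s r x| ≤ C * (1 - x) ^ (-s/2) := by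
  intro x hx
  obtain ⟨h1, h2⟩ := hx
  have hx0 : (0:ℝ) ≤ x := by linarith
  rw [fr_eq hx0]
  split_ifs with hc
  · obtain ⟨hc1, hc2⟩ := hc
    set p0 := ⌊(2*(r:ℝ)+1)*x⌋₊ with hp0
    have hN' := hN r
    have hle : ((p0:ℝ)) ≤ (2*(r:ℝ)+1)*x := Nat.floor_le (by positivity)
    have ht_le : (p0:ℝ)/(2*(r:ℝ)+1) ≤ x := by
      rw [div_le_iff₀ hN']; linarith [mul_comm x (2*(r:ℝ)+1)]
    have ht_mem : (p0:ℝ)/(2*(r:ℝ)+1) ∈ Set.Ioo (1/2:ℝ) 1 := by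
      constructor
      · rw [div_lt_div_iff₀ (by norm_num) hN']
        have : (r:ℝ) + 1 ≤ (p0:ℝ) := by exact_mod_cast hc1
        linarith
      · rw [div_lt_one hN']
        have : (p0:ℝ) ≤ 2*(r:ℝ) := by exact_mod_cast hc2
        linarith
    calc |gg s ((p0:ℝ)/(2*(r:ℝ)+1))| ≤ C * (1 - (p0:ℝ)/(2*(r:ℝ)+1)) ^ (-s/2) :=
          hbd _ ht_mem
      _ ≤ C * (1 - x) ^ (-s/2) := by
          apply mul_le_mul_of_nonneg_left _ hC.le
          apply Real.rpow_le_rpow_of_nonpos (by linarith) (by linarith) (by linarith)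
  · rw [abs_zero]; exact mul_nonneg hC.le (Real.rpow_nonneg (by linarith) _)

lemma fr_tendsto {s : ℝ} {x : ℝ} (hx : x ∈ Set.Ioo (1/2:ℝ) 1) :
    Tendsto (fun r : ℕ => fr s r x) atTop (𝓝 (gg s x)) := by
  obtain ⟨h1, h2⟩ := hx
  have hx0 : (0:ℝ) ≤ x := by linarith
  have hcond : ∀ᶠ r : ℕ in atTop,
      fr s r x = gg s ((⌊(2*(r:ℝ)+1)*x⌋₊ : ℝ)/(2*(r:ℝ)+1)) := by
    filter_upwards [eventually_ge_atTop ⌈(1-x)/(2*x-1)⌉₊] with r hr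
    rw [fr_eq hx0, if_pos]
    constructor
    · rw [Nat.le_floor_iff (by positivity)]
      have h' : ((1-x)/(2*x-1) : ℝ) ≤ (r:ℝ) := le_trans (Nat.le_ceil _) (by exact_mod_cast hr)
      rw [div_le_iff₀ (by linarith : (0:ℝ) < 2*x-1)] at h'
      push_cast
      nlinarith
    · exact floor_le_2r hx0 h2
  have htt : Tendsto (fun r : ℕ => (⌊(2*(r:ℝ)+1)*x⌋₊ : ℝ)/(2*(r:ℝ)+1)) atTop (𝓝 x) := by
    have hNt : Tendsto (fun r : ℕ => 2*(r:ℝ)+1) atTop atTop :=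
      tendsto_atTop_add_const_right _ 1
        (Tendsto.const_mul_atTop two_pos tendsto_natCast_atTop_atTop)
    have hinv : Tendsto (fun r : ℕ => (2*(r:ℝ)+1)⁻¹) atTop (𝓝 0) :=
      hNt.inv_tendsto_atTop
    have hlow : Tendsto (fun r : ℕ => x - (2*(r:ℝ)+1)⁻¹) atTop (𝓝 x) := by
      simpa using tendsto_const_nhds.sub hinv
    apply tendsto_of_tendsto_of_tendsto_of_le_of_le hlow tendsto_const_nhds
    · intro r
      have hN' := hN r
      have := Nat.lt_floor_add_one ((2*(r:ℝ)+1)*x)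
      rw [le_div_iff₀ hN']
      have hNN : (2*(r:ℝ)+1)⁻¹ * (2*(r:ℝ)+1) = 1 := inv_mul_cancel₀ hN'.ne'
      nlinarith [Nat.lt_floor_add_one ((2*(r:ℝ)+1)*x), mul_comm x (2*(r:ℝ)+1)]
    · intro r
      have hN' := hN r
      rw [div_le_iff₀ hN']
      have := Nat.floor_le (show (0:ℝ) ≤ (2*(r:ℝ)+1)*x by positivity)
      linarith [mul_comm x (2*(r:ℝ)+1)]
  exact Tendsto.congr' (hcond.mono fun r hr => hr.symm)
    (((continuousAt_gg ⟨h1, h2⟩).tendsto).comp htt)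


/-- For every real `s` with `0 < s < 2`, the function
`g_s(x) = [x(1−x)/(2x−1)]·(x^{−s}(−1+s ln x) − (1−x)^{−s}(−1+s ln(1−x)))`
is integrable on `(1/2, 1)` and
`(1/(2r+1)) · ∑_{p=r+1}^{2r} g_s(p/(2r+1)) → ∫_{1/2}^1 g_s(x) dx` as the integer `r → ∞`. -/
theorem stmt4 (s : ℝ) (hs0 : 0 < s) (hs2 : s < 2) :
    MeasureTheory.IntegrableOn
        (fun x : ℝ => x * (1 - x) / (2 * x - 1) *
          (x ^ (-s) * (-1 + s * Real.log x) - (1 - x) ^ (-s) * (-1 + s * Real.log (1 - x))))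
        (Set.Ioo (1 / 2 : ℝ) 1) ∧
      Filter.Tendsto
        (fun r : ℕ => (1 / (2 * (r : ℝ) + 1)) *
          ∑ p ∈ Finset.Icc (r + 1) (2 * r),
            (fun x : ℝ => x * (1 - x) / (2 * x - 1) *
              (x ^ (-s) * (-1 + s * Real.log x) -
                (1 - x) ^ (-s) * (-1 + s * Real.log (1 - x))))
              ((p : ℝ) / (2 * (r : ℝ) + 1)))
        Filter.atTop
        (nhds (∫ x in Set.Ioo (1 / 2 : ℝ) 1,
          x * (1 - x) / (2 * x - 1) *
            (x ^ (-s) * (-1 + s * Real.log x) -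
              (1 - x) ^ (-s) * (-1 + s * Real.log (1 - x))))) := by
  obtain ⟨C, hC, hbd⟩ := gg_bound s hs0 hs2
  constructor
  · exact gg_integrableOn s hs0 hs2
  · have hDC : Filter.Tendsto (fun r : ℕ => ∫ x in Set.Ioo (1/2:ℝ) 1, fr s r x) Filter.atTop
        (𝓝 (∫ x in Set.Ioo (1/2:ℝ) 1, gg s x)) := by
      apply MeasureTheory.tendsto_integral_of_dominated_convergence
        (fun x => C * (1-x) ^ (-s/2))
        (fun r => ((fr_meas s r).aestronglyMeasurable).restrict)
        (bound_integrableOn s C hs2)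
        (fun r => (ae_restrict_iff' measurableSet_Ioo).2 (ae_of_all _ (fun x hx => by
          rw [Real.norm_eq_abs]; exact fr_bound hC hbd hs0 r x hx)))
        ((ae_restrict_iff' measurableSet_Ioo).2 (ae_of_all _ (fun x hx => fr_tendsto hx)))
    have := hDC.congr (fun r => fr_integral s r)
    exact this
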